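/- Let G be a cluster graph and F a set of non-edges of G such that G+F is a cluster graph. Then: (i) each connected component of G has its vertex set contained in the vertex set of a connected component of G+F; (ii) for each connected component C of G+F, if H₁,…,H_r are the connected components of G whose vertex sets are contained in V(C), then the pairs of F with both endpoints in V(C) are exactly all pairs {u,v} with u ∈ V(H_i), v ∈ V(H_j) for distinct i,j; and (iii) |F| = Σ_C Σ_{1 ≤ i < j ≤ r_C} |V(H_i^C)|·|V(H_j^C)|, where the outer sum ranges over the connected components C of G+F and H_1^C,…,H_{r_C}^C are the components of G contained in C. -/

import Mathlib

open SimpleGraph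

/-- A graph is a cluster graph if every connected component is a clique
(equivalently, it has no induced `P₃`). -/
def IsClusterGraph {V : Type*} (G : SimpleGraph V) : Prop :=
  ∀ ⦃u v w : V⦄, G.Adj u v → G.Adj v w → u ≠ w → G.Adj u w

/-- `G + F`: the graph obtained from `G` by adding the pairs in `F` as edges. -/
def addEdges {V : Type*} (G : SimpleGraph V) (F : Set (Sym2 V)) : SimpleGraph V :=
  G ⊔ SimpleGraph.fromEdgeSet F

/-- `F` modifies the vertex `v` if some pair of `F` contains `v`. -/
def ModifiesVertex {V : Type*} (F : Set (Sym2 V)) (v : V) : Prop :=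
  ∃ e ∈ F, v ∈ e

/-- `F` modifies the connected component `c` if it modifies some vertex of `c`. -/
def ModifiesComponent {V : Type*} {G : SimpleGraph V} (F : Set (Sym2 V))
    (c : G.ConnectedComponent) : Prop :=
  ∃ v ∈ c.supp, ModifiesVertex F v


theorem completion_structure {V : Type*} [Fintype V]
    (G : SimpleGraph V) (F : Set (Sym2 V))
    (hG : IsClusterGraph G)
    (hF : ∀ e ∈ F, ¬ e.IsDiag ∧ e ∉ G.edgeSet)
    (hGF : IsClusterGraph (addEdges G F)) :
    (∀ c : G.ConnectedComponent,
      ∃ C : (addEdges G F).ConnectedComponent, c.supp ⊆ C.supp) ∧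
    (∀ C : (addEdges G F).ConnectedComponent, ∀ u ∈ C.supp, ∀ v ∈ C.supp, u ≠ v →
      (s(u, v) ∈ F ↔ ¬ G.Reachable u v)) ∧
    F.ncard = ∑ᶠ C : (addEdges G F).ConnectedComponent,
      {e : Sym2 V | ∃ u v : V, e = s(u, v) ∧ u ∈ C.supp ∧ v ∈ C.supp ∧
        ¬ G.Reachable u v}.ncard := by
  classical
  have hle : G ≤ addEdges G F := le_sup_left
  -- in a cluster graph, reachable distinct vertices are adjacent
  have adj_of_reach : ∀ {H : SimpleGraph V}, IsClusterGraph H → ∀ {u v : V},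
      H.Reachable u v → u ≠ v → H.Adj u v := by
    intro H hH u v h hne
    obtain ⟨p⟩ := h
    induction p with
    | nil => exact absurd rfl hne
    | @cons u x v h p ih =>
      by_cases hxv : x = v
      · subst hxv; exact h
      · exact hH h (ih hxv) hne
  -- part (i)
  have part1 : ∀ c : G.ConnectedComponent,
      ∃ C : (addEdges G F).ConnectedComponent, c.supp ⊆ C.supp := by
    intro c
    obtain ⟨v, hv⟩ := c.exists_rep
    refine ⟨(addEdges G F).connectedComponentMk v, fun w hw => ?_⟩
    rw [SimpleGraph.ConnectedComponent.mem_supp_iff] at hw ⊢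
    rw [← hv] at hw
    have : G.Reachable w v := (SimpleGraph.ConnectedComponent.eq).mp hw
    exact SimpleGraph.ConnectedComponent.sound (this.mono hle)
  -- key fact for part (ii)
  have key : ∀ u v : V, u ≠ v → (addEdges G F).Reachable u v →
      (s(u, v) ∈ F ↔ ¬ G.Reachable u v) := by
    intro u v hne hr
    constructor
    · intro he hGr
      exact (hF _ he).2 (G.mem_edgeSet.mpr (adj_of_reach hG hGr hne))
    · intro hGr
      have hadj : (addEdges G F).Adj u v := adj_of_reach hGF hr hne
      rcases hadj with h | h
      · exact absurd h.reachable hGr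
      · exact ((SimpleGraph.fromEdgeSet_adj _).mp h).1
  have part2 : ∀ C : (addEdges G F).ConnectedComponent, ∀ u ∈ C.supp, ∀ v ∈ C.supp,
      u ≠ v → (s(u, v) ∈ F ↔ ¬ G.Reachable u v) := by
    intro C u hu v hv hne
    rw [SimpleGraph.ConnectedComponent.mem_supp_iff] at hu hv
    exact key u v hne ((SimpleGraph.ConnectedComponent.eq).mp (hu.trans hv.symm))
  refine ⟨part1, part2, ?_⟩
  -- part (iii)
  set S : (addEdges G F).ConnectedComponent → Set (Sym2 V) := fun C =>
    {e : Sym2 V | ∃ u v : V, e = s(u, v) ∧ u ∈ C.supp ∧ v ∈ C.supp ∧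
      ¬ G.Reachable u v} with hS
  have hFS : F = ⋃ C, S C := by
    ext e
    induction e using Sym2.ind with
    | _ u v =>
      simp only [Set.mem_iUnion]
      constructor
      · intro he
        have hne : u ≠ v := fun h => (hF _ he).1 (by simp [h])
        have hadj : (addEdges G F).Adj u v :=
          Or.inr ((SimpleGraph.fromEdgeSet_adj _).mpr ⟨he, hne⟩)
        refine ⟨(addEdges G F).connectedComponentMk u, u, v, rfl, rfl, ?_, ?_⟩
        · exact SimpleGraph.ConnectedComponent.sound hadj.symm.reachable
        · exact (key u v hne hadj.reachable).mp he
      · rintro ⟨C, u', v', hee, hu, hv, hnr⟩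
        have hne : u' ≠ v' := fun h => hnr (h ▸ SimpleGraph.Reachable.refl _)
        rw [SimpleGraph.ConnectedComponent.mem_supp_iff] at hu hv
        rw [hee]
        exact (key u' v' hne ((SimpleGraph.ConnectedComponent.eq).mp
          (hu.trans hv.symm))).mpr hnr
  have hdisj : ∀ C C' : (addEdges G F).ConnectedComponent, C ≠ C' →
      Disjoint (S C) (S C') := by
    intro C C' hCC'
    rw [Set.disjoint_left]
    rintro e ⟨u, v, he, hu, hv, _⟩ ⟨u', v', he', hu', hv', _⟩
    rw [he] at he'
    rw [Sym2.eq_iff] at he'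
    rw [SimpleGraph.ConnectedComponent.mem_supp_iff] at hu hv hu' hv'
    rcases he' with ⟨h1, h2⟩ | ⟨h1, h2⟩
    · exact hCC' (by rw [← hu, h1, hu'])
    · exact hCC' (by rw [← hu, h1, hv'])
  haveI : Fintype ((addEdges G F).ConnectedComponent) := Fintype.ofFinite _
  have hfin : ∀ C, (S C).Finite := fun C => Set.toFinite _
  have hcoe : (⋃ C, S C) = ↑(Finset.univ.biUnion fun C => (hfin C).toFinset) := by
    simp only [Finset.coe_biUnion, Set.Finite.coe_toFinset, Finset.mem_coe,
      Finset.mem_univ, Set.iUnion_true]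
  conv_lhs => rw [hFS]
  rw [finsum_eq_sum_of_fintype, hcoe, Set.ncard_coe_finset, Finset.card_biUnion]
  · refine Finset.sum_congr rfl fun C _ => ?_
    rw [Set.ncard_eq_toFinset_card _ (hfin C)]
  · intro C _ C' _ hne
    rw [Function.onFun, Finset.disjoint_left]
    intro e he he'
    rw [Set.Finite.mem_toFinset] at he he'
    exact (Set.disjoint_left.mp (hdisj C C' hne)) he he'
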